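/- Let G be a finite cyclic group with generator σ, and A a G-module that is a finitely generated abelian group. Then (NA : n·A^G) = (A : A^G + ₙA) = ((1-σ)A : (1-σ)(ₙA)), where n = #G, N = Σ_{τ∈G} τ, ₙA = ker(N), NA = im(N). -/

import Mathlib

lemma card_quot_eq {A B : Type*} [AddCommGroup A] [AddCommGroup B] (f : A →+ B)
    (S : AddSubgroup A) (hker : f.ker ≤ S) :
    Nat.card (A ⧸ S) = Nat.card (f.range ⧸ ((S.map f).addSubgroupOf f.range)) := by
  set T := (S.map f).addSubgroupOf f.range with hT
  let φ : A →+ f.range ⧸ T := (QuotientAddGroup.mk' T).comp f.rangeRestrict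
  have hφs : Function.Surjective φ :=
    (QuotientAddGroup.mk'_surjective T).comp f.rangeRestrict_surjective
  have hker' : φ.ker = S := by
    ext a
    have h1 : φ a = 0 ↔ f a ∈ S.map f := by
      rw [show φ a = ((f.rangeRestrict a : f.range) : f.range ⧸ T) from rfl,
        QuotientAddGroup.eq_zero_iff, hT, AddSubgroup.mem_addSubgroupOf]
      rfl
    rw [AddMonoidHom.mem_ker, h1]
    constructor
    · rintro ⟨s, hs, hfs⟩
      have hd : a - s ∈ f.ker := by
        rw [AddMonoidHom.mem_ker, map_sub, hfs, sub_self]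
      have := S.add_mem (hker hd) hs
      simpa using this
    · exact fun h => ⟨a, h, rfl⟩
  exact Nat.card_congr ((QuotientAddGroup.quotientAddEquivOfEq hker'.symm).trans
    (QuotientAddGroup.quotientKerEquivOfSurjective φ hφs)).toEquiv

variable (G : Type*) [Group G] [Fintype G] (A : Type*) [AddCommGroup A] [DistribMulAction G A]

/-- The norm map `a ↦ ∑_{τ ∈ G} τ • a`. -/
noncomputable def normMap : A →+ A := ∑ τ : G, DistribMulAction.toAddMonoidHom A τ

/-- The map `a ↦ a - σ • a`. -/
def oneSubMap (σ : G) : A →+ A := AddMonoidHom.id A - DistribMulAction.toAddMonoidHom A σ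

/-- The subgroup of `G`-fixed points `A^G`. -/
def fixedSub : AddSubgroup A where
  carrier := {a | ∀ τ : G, τ • a = a}
  zero_mem' := fun τ => smul_zero τ
  add_mem' := fun ha hb τ => by rw [smul_add, ha τ, hb τ]
  neg_mem' := fun ha τ => by rw [smul_neg, ha τ]

/-- `#H¹(G,A)` for `G` cyclic with generator `σ`, computed as `#(ker N_G / (1-σ)A)`. -/
noncomputable def H1card (σ : G) : ℕ :=
  Nat.card ((normMap G A).ker ⧸ ((oneSubMap G A σ).range.addSubgroupOf (normMap G A).ker))

/-- `#Ĥ⁰(G,A) = (A^G : N_G A)`. -/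
noncomputable def H0card : ℕ :=
  Nat.card (fixedSub G A ⧸ ((normMap G A).range.addSubgroupOf (fixedSub G A)))

/-- The Herbrand quotient `h(G,A) = #Ĥ⁰(G,A) / #H¹(G,A)`. -/
noncomputable def herbrand (σ : G) : ℚ := (H0card G A : ℚ) / (H1card G A σ : ℚ)

lemma normMap_apply (a : A) : normMap G A a = ∑ τ : G, τ • a := by
  simp [normMap, AddMonoidHom.finset_sum_apply]

lemma normMap_fixed (a : A) (ha : a ∈ fixedSub G A) :
    normMap G A a = Fintype.card G • a := by
  rw [normMap_apply]
  rw [Finset.sum_congr rfl fun τ _ => ha τ]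
  simp [Finset.sum_const, Finset.card_univ]

set_option linter.unusedSectionVars false in
lemma oneSubMap_ker (σ : G) (hgen : ∀ τ : G, τ ∈ Subgroup.zpowers σ) :
    (oneSubMap G A σ).ker = fixedSub G A := by
  ext a
  simp only [AddMonoidHom.mem_ker, oneSubMap, AddMonoidHom.sub_apply, AddMonoidHom.id_apply,
    DistribMulAction.toAddMonoidHom_apply, sub_eq_zero]
  constructor
  · intro h τ
    obtain ⟨k, rfl⟩ := hgen τ
    induction k using Int.induction_on with
    | zero => simp
    | succ m ih =>
        show σ ^ ((m : ℤ) + 1) • a = a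
        rw [zpow_add_one, mul_smul, ← h]
        exact ih
    | pred m ih =>
        show σ ^ (-(m : ℤ) - 1) • a = a
        have h2 : σ⁻¹ • a = a := by
          conv_lhs => rw [h]
          rw [← mul_smul, inv_mul_cancel, one_smul]
        rw [zpow_sub_one, mul_smul, h2]
        exact ih
  · intro h; exact (h σ).symm

/-- For `G` cyclic of order `n` with generator `σ` and `A` a finitely
generated `G`-module, `(NA : n·A^G) = (A : A^G + ₙA) = ((1-σ)A : (1-σ)(ₙA))`. -/
theorem index_eq_index_eq_index
    (σ : G) (hgen : ∀ τ : G, τ ∈ Subgroup.zpowers σ) (n : ℕ) (hn : n = Fintype.card G)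
    [AddGroup.FG A] :
    Nat.card ((normMap G A).range ⧸
        ((AddSubgroup.map (n • AddMonoidHom.id A) (fixedSub G A)).addSubgroupOf
          (normMap G A).range)) =
      Nat.card (A ⧸ (fixedSub G A ⊔ (normMap G A).ker)) ∧
    Nat.card (A ⧸ (fixedSub G A ⊔ (normMap G A).ker)) =
      Nat.card ((oneSubMap G A σ).range ⧸
        ((AddSubgroup.map (oneSubMap G A σ) (normMap G A).ker).addSubgroupOf
          (oneSubMap G A σ).range)) := by
  set S := fixedSub G A ⊔ (normMap G A).ker with hS
  have hkσ := oneSubMap_ker G A σ hgen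
  constructor
  · have hmap1 : S.map (normMap G A) =
        AddSubgroup.map (n • AddMonoidHom.id A) (fixedSub G A) := by
      rw [hS, AddSubgroup.map_sup, (AddSubgroup.map_eq_bot_iff _).mpr le_rfl, sup_bot_eq]
      ext x
      simp only [AddSubgroup.mem_map, AddMonoidHom.smul_apply, AddMonoidHom.id_apply]
      constructor
      · rintro ⟨a, ha, rfl⟩
        exact ⟨a, ha, by rw [normMap_fixed G A a ha, hn]⟩
      · rintro ⟨a, ha, rfl⟩
        exact ⟨a, ha, by rw [normMap_fixed G A a ha, hn]⟩
    rw [← hmap1]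
    exact (card_quot_eq (normMap G A) S le_sup_right).symm
  · have hmap2 : S.map (oneSubMap G A σ) =
        AddSubgroup.map (oneSubMap G A σ) (normMap G A).ker := by
      rw [hS, AddSubgroup.map_sup, ← hkσ, (AddSubgroup.map_eq_bot_iff _).mpr le_rfl, bot_sup_eq]
    rw [← hmap2]
    exact card_quot_eq (oneSubMap G A σ) S (hkσ ▸ le_sup_left)
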